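/- The support of a generalized point is well defined and, for compactly supported points, nonempty and compact: for a moderate net p:(0,1]→ℝ^n define supp(p) = ⋂_{η∈(0,1]} closure{p(ε) : 0<ε≤η}. Then supp(p) = supp(q) whenever p−q is negligible; if p is compactly supported (i.e. some representative is bounded), then supp(p) is a nonempty compact subset of ℝ^n; and if ‖p‖ < 1 then supp(p) = {0}. -/

import Mathlib

open Set
open scoped Classical

noncomputable section

/-!
STATEMENT 13: The support of a generalized point is well defined and, for compactly supported
points, nonempty and compact: for a moderate net `p : (0,1] → ℝ^n` define
`supp p = ⋂_{η∈(0,1]} closure {p ε : 0 < ε ≤ η}`.  Then `supp p = supp q` whenever `p − q` is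
negligible; if `p` is compactly supported (some representative is bounded) then `supp p` is a
nonempty compact subset of `ℝ^n`; and if `‖p‖ < 1` then `supp p = {0}`.
-/

/-- A property `P` of `ε` holds *eventually* if it holds for all `ε` in some interval `(0, η]`
with `η ∈ (0,1]`. -/
def Ev (P : ℝ → Prop) : Prop :=
  ∃ η : ℝ, 0 < η ∧ η ≤ 1 ∧ ∀ ε : ℝ, 0 < ε → ε ≤ η → P ε

/-- A net of points of `ℝ^n` is *moderate* if `‖p ε‖ ≤ ε^(-N)` eventually, for some `N`. -/
def ModerateV {n : ℕ} (p : ℝ → EuclideanSpace ℝ (Fin n)) : Prop :=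
  ∃ N : ℕ, Ev fun ε => ‖p ε‖ ≤ (ε ^ N)⁻¹

/-- A net of points of `ℝ^n` is *negligible* if `‖p ε‖ ≤ ε^q` eventually, for every `q`. -/
def NegligibleV {n : ℕ} (p : ℝ → EuclideanSpace ℝ (Fin n)) : Prop :=
  ∀ q : ℕ, Ev fun ε => ‖p ε‖ ≤ ε ^ q

/-- The support of a net: the intersection over `η ∈ (0,1]` of the closures of the tails. -/
def suppP {n : ℕ} (p : ℝ → EuclideanSpace ℝ (Fin n)) : Set (EuclideanSpace ℝ (Fin n)) :=
  ⋂ η ∈ Ioc (0:ℝ) 1, closure (p '' Ioc 0 η)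

/-- The set whose supremum is the valuation `V p`. -/
def VsetV {n : ℕ} (p : ℝ → EuclideanSpace ℝ (Fin n)) : Set ℝ :=
  {r : ℝ | Ev fun ε => ‖p ε‖ ≤ ε ^ r}

/-- The sharp norm `‖p‖ = e^{-V p}`, with value `0` when `V p = ∞`. -/
noncomputable def vnormV {n : ℕ} (p : ℝ → EuclideanSpace ℝ (Fin n)) : ℝ :=
  if BddAbove (VsetV p) then Real.exp (-sSup (VsetV p)) else 0

/-- One inclusion of the well-definedness of the support. -/
lemma suppP_subset_of_neg {n : ℕ} {p q : ℝ → EuclideanSpace ℝ (Fin n)}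
    (h : NegligibleV (fun ε => p ε - q ε)) : suppP p ⊆ suppP q := by
  intro x hx
  simp only [suppP, mem_iInter] at hx ⊢
  intro η hη
  rw [Metric.mem_closure_iff]
  intro δ hδ
  obtain ⟨η₁, hη₁0, hη₁1, hb⟩ := h 1
  set η' := min η (min η₁ (δ/2)) with hη'def
  have hη'0 : 0 < η' := lt_min hη.1 (lt_min hη₁0 (by linarith))
  have hη'1 : η' ≤ 1 := le_trans (min_le_left _ _) hη.2
  have hx' := hx η' ⟨hη'0, hη'1⟩
  rw [Metric.mem_closure_iff] at hx'
  obtain ⟨y, hy, hdy⟩ := hx' (δ/2) (by linarith)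
  obtain ⟨ε, hε, rfl⟩ := hy
  have hεη : ε ≤ η := le_trans hε.2 (min_le_left _ _)
  have hεη₁ : ε ≤ η₁ := le_trans hε.2 (le_trans (min_le_right _ _) (min_le_left _ _))
  have hεδ : ε ≤ δ/2 := le_trans hε.2 (le_trans (min_le_right _ _) (min_le_right _ _))
  have hpq : ‖p ε - q ε‖ ≤ ε := by simpa using hb ε hε.1 hεη₁
  refine ⟨q ε, ⟨ε, ⟨hε.1, hεη⟩, rfl⟩, ?_⟩
  calc dist x (q ε) ≤ dist x (p ε) + dist (p ε) (q ε) := dist_triangle _ _ _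
    _ < δ/2 + δ/2 := by
        have h2 : dist (p ε) (q ε) ≤ δ/2 := by
          rw [dist_eq_norm]; exact le_trans hpq hεδ
        linarith
    _ = δ := by ring

/-- If the net is eventually bounded, the support is nonempty and compact. -/
lemma suppP_nonempty_compact_of_bounded {n : ℕ} {p : ℝ → EuclideanSpace ℝ (Fin n)}
    {η₀ C : ℝ} (hη₀ : η₀ ∈ Ioc (0:ℝ) 1) (hC : ∀ ε ∈ Ioc (0:ℝ) η₀, ‖p ε‖ ≤ C) :
    (suppP p).Nonempty ∧ IsCompact (suppP p) := by
  have hball : ∀ η ∈ Ioc (0:ℝ) η₀,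
      closure (p '' Ioc 0 η) ⊆ Metric.closedBall 0 C := by
    intro η hη
    refine closure_minimal ?_ Metric.isClosed_closedBall
    rintro y ⟨ε, hε, rfl⟩
    rw [mem_closedBall_zero_iff]
    exact hC ε ⟨hε.1, le_trans hε.2 hη.2⟩
  have hcpt : ∀ η ∈ Ioc (0:ℝ) η₀, IsCompact (closure (p '' Ioc 0 η)) := fun η hη =>
    (isCompact_closedBall 0 C).of_isClosed_subset isClosed_closure (hball η hη)
  have hrw : suppP p = ⋂ (η : Ioc (0:ℝ) η₀), closure (p '' Ioc 0 (η:ℝ)) := by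
    ext x
    simp only [suppP, mem_iInter]
    constructor
    · intro hx η
      exact hx η ⟨η.2.1, le_trans η.2.2 hη₀.2⟩
    · intro hx η hη
      have hmin : min η η₀ ∈ Ioc (0:ℝ) η₀ := ⟨lt_min hη.1 hη₀.1, min_le_right _ _⟩
      exact closure_mono (image_mono (Ioc_subset_Ioc_right (min_le_left _ _)))
        (hx ⟨min η η₀, hmin⟩)
  constructor
  · rw [hrw]
    haveI : Nonempty (Ioc (0:ℝ) η₀) := ⟨⟨η₀, hη₀.1, le_rfl⟩⟩
    refine IsCompact.nonempty_iInter_of_directed_nonempty_isCompact_isClosed _ ?_ ?_ ?_ ?_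
    · intro a b
      refine ⟨⟨min a b, lt_min a.2.1 b.2.1, le_trans (min_le_left _ _) a.2.2⟩,
        closure_mono (image_mono (Ioc_subset_Ioc_right (min_le_left _ _))),
        closure_mono (image_mono (Ioc_subset_Ioc_right (min_le_right _ _)))⟩
    · intro η
      exact ((Set.nonempty_Ioc.mpr η.2.1).image p).closure
    · intro η; exact hcpt η η.2
    · intro η; exact isClosed_closure
  · refine (hcpt η₀ ⟨hη₀.1, le_rfl⟩).of_isClosed_subset ?_ ?_
    · exact isClosed_biInter fun η hη => isClosed_closure
    · intro x hx
      simp only [suppP, mem_iInter] at hx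
      exact hx η₀ hη₀

/-- If the net eventually satisfies `‖p ε‖ ≤ ε ^ r` for some `r > 0`, the support is `{0}`. -/
lemma suppP_eq_singleton_zero {n : ℕ} {p : ℝ → EuclideanSpace ℝ (Fin n)}
    {r η₁ : ℝ} (hr : 0 < r) (hη₁ : 0 < η₁)
    (hb : ∀ ε : ℝ, 0 < ε → ε ≤ η₁ → ‖p ε‖ ≤ ε ^ r) :
    suppP p = {0} := by
  have htend : Filter.Tendsto (fun ε : ℝ => ε ^ r) (nhdsWithin 0 (Ioi 0)) (nhds 0) := by
    have hc : ContinuousAt (fun x : ℝ => x ^ r) 0 :=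
      Real.continuousAt_rpow_const 0 r (Or.inr hr.le)
    have := hc.tendsto.mono_left (nhdsWithin_le_nhds (s := Ioi (0:ℝ)))
    rwa [Real.zero_rpow hr.ne'] at this
  ext x
  simp only [mem_singleton_iff]
  constructor
  · intro hx
    simp only [suppP, mem_iInter] at hx
    have hnorm : ∀ η : ℝ, 0 < η → η ≤ min η₁ 1 → ‖x‖ ≤ η ^ r := by
      intro η hη0 hη2
      have hx' := hx η ⟨hη0, le_trans hη2 (min_le_right _ _)⟩
      have hsub : closure (p '' Ioc 0 η) ⊆ Metric.closedBall 0 (η ^ r) := by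
        refine closure_minimal ?_ Metric.isClosed_closedBall
        rintro y ⟨ε, hε, rfl⟩
        rw [mem_closedBall_zero_iff]
        refine le_trans (hb ε hε.1 (le_trans hε.2 (le_trans hη2 (min_le_left _ _)))) ?_
        exact Real.rpow_le_rpow hε.1.le hε.2 hr.le
      simpa [mem_closedBall_zero_iff] using hsub hx'
    have hle : ‖x‖ ≤ 0 := by
      refine ge_of_tendsto htend ?_
      filter_upwards [Ioc_mem_nhdsGT_of_mem
        (⟨le_rfl, lt_min hη₁ one_pos⟩ : (0:ℝ) ∈ Ico (0:ℝ) (min η₁ 1))] with η hη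
      exact hnorm η hη.1 hη.2
    simpa using le_antisymm hle (norm_nonneg x)
  · rintro rfl
    simp only [suppP, mem_iInter]
    intro η hη
    rw [Metric.mem_closure_iff]
    intro δ hδ
    have h1 : ∀ᶠ ε in nhdsWithin (0:ℝ) (Ioi 0), ε ^ r < δ :=
      htend.eventually (Filter.tendsto_id.eventually_lt_const hδ)
    have h2 : ∀ᶠ ε in nhdsWithin (0:ℝ) (Ioi 0), ε ∈ Ioc (0:ℝ) (min η η₁) :=
      Ioc_mem_nhdsGT_of_mem ⟨le_rfl, lt_min hη.1 hη₁⟩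
    obtain ⟨ε, hεδ, hεm⟩ := (h1.and h2).exists
    refine ⟨p ε, ⟨ε, ⟨hεm.1, le_trans hεm.2 (min_le_left _ _)⟩, rfl⟩, ?_⟩
    rw [dist_zero_left]  -- dist 0 (p ε) = ‖p ε‖ ? check direction
    exact lt_of_le_of_lt (hb ε hεm.1 (le_trans hεm.2 (min_le_right _ _))) hεδ

theorem support_wellDefined_nonempty_compact (n : ℕ) :
    -- the support only depends on the class modulo negligible nets
    (∀ p q : ℝ → EuclideanSpace ℝ (Fin n), ModerateV p → ModerateV q →
      NegligibleV (fun ε => p ε - q ε) → suppP p = suppP q) ∧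
    -- a compactly supported point has nonempty compact support
    (∀ p q : ℝ → EuclideanSpace ℝ (Fin n), ModerateV p →
      NegligibleV (fun ε => p ε - q ε) →
      (∃ C : ℝ, ∀ ε ∈ Ioc (0:ℝ) 1, ‖q ε‖ ≤ C) →
      (suppP p).Nonempty ∧ IsCompact (suppP p)) ∧
    -- a point of the unit ball has support `{0}`
    (∀ p : ℝ → EuclideanSpace ℝ (Fin n), ModerateV p → vnormV p < 1 →
      suppP p = {(0 : EuclideanSpace ℝ (Fin n))}) := by
  refine ⟨?_, ?_, ?_⟩
  · intro p q _ _ h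
    refine le_antisymm (suppP_subset_of_neg h) (suppP_subset_of_neg ?_)
    intro m
    obtain ⟨η₁, hη₁0, hη₁1, hb⟩ := h m
    exact ⟨η₁, hη₁0, hη₁1, fun ε hε1 hε2 => by
      simpa [norm_sub_rev] using hb ε hε1 hε2⟩
  · rintro p q _ h ⟨C, hC⟩
    obtain ⟨η₁, hη₁0, hη₁1, hb⟩ := h 1
    refine suppP_nonempty_compact_of_bounded (η₀ := η₁) ⟨hη₁0, hη₁1⟩ (C := C + 1) ?_
    intro ε hε
    have h1 : ‖p ε - q ε‖ ≤ ε := by simpa using hb ε hε.1 hε.2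
    have h2 : ‖q ε‖ ≤ C := hC ε ⟨hε.1, le_trans hε.2 hη₁1⟩
    have h3 : ε ≤ 1 := le_trans hε.2 hη₁1
    calc ‖p ε‖ = ‖q ε + (p ε - q ε)‖ := by congr 1; abel
      _ ≤ ‖q ε‖ + ‖p ε - q ε‖ := norm_add_le _ _
      _ ≤ C + 1 := by linarith
  · rintro p ⟨N, ηN, hηN0, hηN1, hN⟩ hnorm
    -- produce a positive exponent `r` in `VsetV p`
    have hNmem : (-(N:ℝ)) ∈ VsetV p := by
      refine ⟨ηN, hηN0, hηN1, fun ε hε1 hε2 => ?_⟩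
      show ‖p ε‖ ≤ ε ^ (-(N:ℝ))
      have : (ε : ℝ) ^ (-(N:ℝ)) = (ε ^ N)⁻¹ := by
        rw [Real.rpow_neg hε1.le, Real.rpow_natCast]
      rw [this]
      exact hN ε hε1 hε2
    have hex : ∃ r ∈ VsetV p, (0:ℝ) < r := by
      by_cases hbdd : BddAbove (VsetV p)
      · have : Real.exp (-sSup (VsetV p)) < 1 := by
          simpa [vnormV, hbdd] using hnorm
        have hsup : 0 < sSup (VsetV p) := by
          have := Real.exp_lt_one_iff.mp this
          linarith
        exact exists_lt_of_lt_csSup ⟨_, hNmem⟩ hsup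
      · obtain ⟨r, hr, hr0⟩ := not_bddAbove_iff.mp hbdd 0
        exact ⟨r, hr, hr0⟩
    obtain ⟨r, ⟨η₁, hη₁0, _, hb⟩, hr0⟩ := hex
    exact suppP_eq_singleton_zero hr0 hη₁0 hb
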